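/- arXiv:0711.0035 — 5 statements merged into one kernel-verified Lean document; each statement's English description precedes it below -/
import Mathlib

section
/- Let (M, 𝒜, μ) be a σ-finite measure space, S a dense subspace of a separable Hilbert space H, T a bounded operator on H, and Λ : M → B(H) weakly measurable with each Λ(q) positive. If ⟨ψ, Tψ⟩ = ∫ ⟨ψ, Λ(q)ψ⟩ dμ(q) holds for all ψ ∈ S, then it holds for all ψ ∈ H. -/
open scoped ComplexOrder
open MeasureTheory

section aux
variable {H : Type*} [NormedAddCommGroup H] [InnerProductSpace ℂ H]

private lemma expand_re' (P : H →L[ℂ] H) (a b : H) (t : ℝ) :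
    (inner ℂ (a + (t:ℂ) • b) (P (a + (t:ℂ) • b)) : ℂ).re
      = (inner ℂ b (P b) : ℂ).re * (t * t)
        + ((inner ℂ a (P b) : ℂ).re + (inner ℂ b (P a) : ℂ).re) * t
        + (inner ℂ a (P a) : ℂ).re := by
  have h : (inner ℂ (a + (t:ℂ) • b) (P (a + (t:ℂ) • b)) : ℂ)
      = inner ℂ a (P a) + (t:ℂ) * inner ℂ a (P b) + (t:ℂ) * inner ℂ b (P a)
        + (t:ℂ) * ((t:ℂ) * inner ℂ b (P b)) := by
    simp only [map_add, _root_.map_smul, inner_add_left, inner_add_right, inner_smul_left,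
      inner_smul_right, Complex.conj_ofReal]
    ring
  rw [h]
  simp only [Complex.add_re, Complex.mul_re, Complex.ofReal_re, Complex.ofReal_im, zero_mul,
    sub_zero, Complex.mul_im, add_zero]
  ring

private lemma sqrt_quad' {ga gb c : ℝ} (hga : 0 ≤ ga) (hgb : 0 ≤ gb)
    (hq : ∀ t : ℝ, 0 ≤ gb * (t * t) + c * t + ga) :
    Real.sqrt (gb * (1 * 1) + c * 1 + ga) ≤ Real.sqrt ga + Real.sqrt gb := by
  have hd := discrim_le_zero hq
  rw [discrim] at hd
  have hsa := Real.sq_sqrt hga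
  have hsb := Real.sq_sqrt hgb
  have hna := Real.sqrt_nonneg ga
  have hnb := Real.sqrt_nonneg gb
  have hk : (0:ℝ) ≤ 2 * (Real.sqrt ga * Real.sqrt gb) := by positivity
  have hk2 : (2 * (Real.sqrt ga * Real.sqrt gb)) ^ 2 = 4 * gb * ga := by
    nlinarith [hsa, hsb]
  have hcle : c ≤ 2 * (Real.sqrt ga * Real.sqrt gb) := by nlinarith [hd, hk, hk2]
  have h2 : gb * (1*1) + c * 1 + ga ≤ (Real.sqrt ga + Real.sqrt gb) ^ 2 := by nlinarith
  calc Real.sqrt (gb * (1*1) + c * 1 + ga) ≤ Real.sqrt ((Real.sqrt ga + Real.sqrt gb) ^ 2) :=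
        Real.sqrt_le_sqrt h2
    _ = Real.sqrt ga + Real.sqrt gb := Real.sqrt_sq (by positivity)

private lemma sqrt_tri' (P : H →L[ℂ] H) (hP : ∀ ψ : H, 0 ≤ (inner ℂ ψ (P ψ) : ℂ)) (a b : H) :
    Real.sqrt ((inner ℂ (a + b) (P (a + b)) : ℂ).re)
      ≤ Real.sqrt ((inner ℂ a (P a) : ℂ).re) + Real.sqrt ((inner ℂ b (P b) : ℂ).re) := by
  have hre : ∀ ψ : H, 0 ≤ (inner ℂ ψ (P ψ) : ℂ).re := fun ψ => by
    simpa using (Complex.le_def.mp (hP ψ)).1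
  have hq : ∀ t : ℝ, 0 ≤ (inner ℂ b (P b) : ℂ).re * (t * t)
      + ((inner ℂ a (P b) : ℂ).re + (inner ℂ b (P a) : ℂ).re) * t + (inner ℂ a (P a) : ℂ).re := by
    intro t
    have h0 := hre (a + (t:ℂ) • b)
    rwa [expand_re'] at h0
  have hab : (inner ℂ (a + b) (P (a + b)) : ℂ).re
      = (inner ℂ b (P b) : ℂ).re * (1 * 1)
        + ((inner ℂ a (P b) : ℂ).re + (inner ℂ b (P a) : ℂ).re) * 1 + (inner ℂ a (P a) : ℂ).re := by
    have := expand_re' P a b 1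
    simpa using this
  rw [hab]
  exact sqrt_quad' (hre a) (hre b) hq

private lemma abs_diff_le' (P : H →L[ℂ] H) (hP : ∀ ψ : H, 0 ≤ (inner ℂ ψ (P ψ) : ℂ)) (x y : H) :
    |(inner ℂ x (P x) : ℂ).re - (inner ℂ y (P y) : ℂ).re|
      ≤ Real.sqrt ((inner ℂ (x - y) (P (x - y)) : ℂ).re)
        * (Real.sqrt ((inner ℂ x (P x) : ℂ).re) + Real.sqrt ((inner ℂ y (P y) : ℂ).re)) := by
  have hre : ∀ ψ : H, 0 ≤ (inner ℂ ψ (P ψ) : ℂ).re := fun ψ => by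
    simpa using (Complex.le_def.mp (hP ψ)).1
  have hneg : (inner ℂ (y - x) (P (y - x)) : ℂ).re = (inner ℂ (x - y) (P (x - y)) : ℂ).re := by
    have h : y - x = -(x - y) := by abel
    rw [h, map_neg, inner_neg_neg]
  have h1 : Real.sqrt ((inner ℂ x (P x) : ℂ).re)
      ≤ Real.sqrt ((inner ℂ (x - y) (P (x - y)) : ℂ).re) + Real.sqrt ((inner ℂ y (P y) : ℂ).re) := by
    have := sqrt_tri' P hP (x - y) y
    simpa using this
  have h2 : Real.sqrt ((inner ℂ y (P y) : ℂ).re)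
      ≤ Real.sqrt ((inner ℂ (x - y) (P (x - y)) : ℂ).re) + Real.sqrt ((inner ℂ x (P x) : ℂ).re) := by
    have := sqrt_tri' P hP (y - x) x
    rw [hneg] at this
    simpa using this
  have hx := Real.sq_sqrt (hre x)
  have hy := Real.sq_sqrt (hre y)
  have hd := Real.sqrt_nonneg ((inner ℂ (x - y) (P (x - y)) : ℂ).re)
  have hnx := Real.sqrt_nonneg ((inner ℂ x (P x) : ℂ).re)
  have hny := Real.sqrt_nonneg ((inner ℂ y (P y) : ℂ).re)
  rw [abs_sub_le_iff]
  constructor <;> nlinarith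

end aux

/-- If `⟨ψ, Tψ⟩ = ∫ ⟨ψ, Λ(q)ψ⟩ dμ(q)` holds (with integrability) for all `ψ` in a
dense subspace `S`, then it holds for all `ψ ∈ H`. -/
theorem stmt_2 {H : Type*} [NormedAddCommGroup H] [InnerProductSpace ℂ H]
    [CompleteSpace H] [TopologicalSpace.SeparableSpace H]
    {M : Type*} [MeasurableSpace M] (μ : Measure M) [SigmaFinite μ]
    (S : Submodule ℂ H) (hS : Dense (S : Set H))
    (T : H →L[ℂ] H) (Λ : M → H →L[ℂ] H)
    (hmeas : ∀ ψ : H, Measurable fun q => (inner ℂ ψ (Λ q ψ) : ℂ))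
    (hpos : ∀ q, ∀ ψ : H, 0 ≤ (inner ℂ ψ (Λ q ψ) : ℂ))
    (hT : ∀ ψ : H, ψ ∈ S →
        Integrable (fun q => (inner ℂ ψ (Λ q ψ) : ℂ)) μ ∧
        (inner ℂ ψ (T ψ) : ℂ) = ∫ q, (inner ℂ ψ (Λ q ψ) : ℂ) ∂μ) :
    ∀ ψ : H,
        Integrable (fun q => (inner ℂ ψ (Λ q ψ) : ℂ)) μ ∧
        (inner ℂ ψ (T ψ) : ℂ) = ∫ q, (inner ℂ ψ (Λ q ψ) : ℂ) ∂μ := by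
  have hre : ∀ (q : M) (χ : H), 0 ≤ (inner ℂ χ (Λ q χ) : ℂ).re := fun q χ => by
    simpa using (Complex.le_def.mp (hpos q χ)).1
  have hC : ∀ (q : M) (χ : H), (inner ℂ χ (Λ q χ) : ℂ) = (((inner ℂ χ (Λ q χ) : ℂ).re : ℝ) : ℂ) := by
    intro q χ
    have him : (inner ℂ χ (Λ q χ) : ℂ).im = 0 := by
      simpa using (Complex.le_def.mp (hpos q χ)).2.symm
    exact Complex.ext (by simp) (by simp [him])
  have hgmeas : ∀ χ : H, Measurable fun q => (inner ℂ χ (Λ q χ) : ℂ).re :=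
    fun χ => Complex.measurable_re.comp (hmeas χ)
  have hcont : ∀ q : M, Continuous fun χ : H => (inner ℂ χ (Λ q χ) : ℂ).re := fun q =>
    Complex.continuous_re.comp (continuous_id.inner ((Λ q).continuous))
  have hTb : ∀ χ : H, (inner ℂ χ (T χ) : ℂ).re ≤ ‖T‖ * ‖χ‖ ^ 2 := by
    intro χ
    calc (inner ℂ χ (T χ) : ℂ).re ≤ ‖(inner ℂ χ (T χ) : ℂ)‖ := Complex.re_le_norm _
      _ ≤ ‖χ‖ * ‖T χ‖ := norm_inner_le_norm _ _
      _ ≤ ‖χ‖ * (‖T‖ * ‖χ‖) :=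
          mul_le_mul_of_nonneg_left (T.le_opNorm χ) (norm_nonneg χ)
      _ = ‖T‖ * ‖χ‖ ^ 2 := by ring
  have hpow2 : ∀ r : ℝ, 0 ≤ r →
      (ENNReal.ofReal r) ^ (2:ℝ) = ENNReal.ofReal (r ^ 2) := by
    intro r hr
    rw [ENNReal.ofReal_rpow_of_nonneg hr (by norm_num),
      show (2:ℝ) = ((2:ℕ):ℝ) from by norm_num, Real.rpow_natCast]
  -- on S, the lintegral of the (nonnegative real) density equals ⟨χ, Tχ⟩
  have hSeq : ∀ χ ∈ S, ∫⁻ q, ENNReal.ofReal ((inner ℂ χ (Λ q χ) : ℂ).re) ∂μ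
      = ENNReal.ofReal ((inner ℂ χ (T χ) : ℂ).re) := by
    intro χ hχ
    obtain ⟨hint, heq⟩ := hT χ hχ
    have hintR : Integrable (fun q => (inner ℂ χ (Λ q χ) : ℂ).re) μ := by
      have := hint.re
      simpa using this
    rw [← ofReal_integral_eq_lintegral_ofReal hintR
      (Filter.Eventually.of_forall fun q => hre q χ)]
    congr 1
    have h1 : ∫ q, (inner ℂ χ (Λ q χ) : ℂ).re ∂μ = (∫ q, (inner ℂ χ (Λ q χ) : ℂ) ∂μ).re := by
      have := integral_re hint
      simpa using this
    rw [h1, ← heq]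
  -- Fatou bound, valid for every vector
  have hA : ∀ χ : H, ∫⁻ q, ENNReal.ofReal ((inner ℂ χ (Λ q χ) : ℂ).re) ∂μ
      ≤ ENNReal.ofReal (‖T‖ * ‖χ‖ ^ 2) := by
    intro χ
    have hmem : χ ∈ closure (S : Set H) := by rw [hS.closure_eq]; trivial
    obtain ⟨x, hxS, hx⟩ := mem_closure_iff_seq_limit.mp hmem
    have h1 : ∀ q : M, Filter.Tendsto
        (fun n => ENNReal.ofReal ((inner ℂ (x n) (Λ q (x n)) : ℂ).re))
        Filter.atTop (nhds (ENNReal.ofReal ((inner ℂ χ (Λ q χ) : ℂ).re))) := fun q =>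
      (ENNReal.continuous_ofReal.tendsto _).comp (((hcont q).tendsto χ).comp hx)
    have hnorm : Filter.Tendsto (fun n => ENNReal.ofReal (‖T‖ * ‖x n‖ ^ 2)) Filter.atTop
        (nhds (ENNReal.ofReal (‖T‖ * ‖χ‖ ^ 2))) :=
      (ENNReal.continuous_ofReal.tendsto _).comp (((hx.norm).pow 2).const_mul ‖T‖)
    calc ∫⁻ q, ENNReal.ofReal ((inner ℂ χ (Λ q χ) : ℂ).re) ∂μ
        = ∫⁻ q, Filter.liminf
            (fun n => ENNReal.ofReal ((inner ℂ (x n) (Λ q (x n)) : ℂ).re)) Filter.atTop ∂μ :=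
          lintegral_congr fun q => ((h1 q).liminf_eq).symm
      _ ≤ Filter.liminf
            (fun n => ∫⁻ q, ENNReal.ofReal ((inner ℂ (x n) (Λ q (x n)) : ℂ).re) ∂μ)
            Filter.atTop :=
          lintegral_liminf_le fun n => ENNReal.measurable_ofReal.comp (hgmeas (x n))
      _ ≤ Filter.liminf (fun n => ENNReal.ofReal (‖T‖ * ‖x n‖ ^ 2)) Filter.atTop := by
          refine Filter.liminf_le_liminf (Filter.Eventually.of_forall fun n => ?_)
          rw [hSeq (x n) (hxS n)]
          exact ENNReal.ofReal_le_ofReal (hTb (x n))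
      _ = ENNReal.ofReal (‖T‖ * ‖χ‖ ^ 2) := hnorm.liminf_eq
  -- integrability for every vector
  have hIntR : ∀ χ : H, Integrable (fun q => (inner ℂ χ (Λ q χ) : ℂ).re) μ := by
    intro χ
    refine ⟨(hgmeas χ).aestronglyMeasurable, ?_⟩
    rw [hasFiniteIntegral_iff_norm]
    calc ∫⁻ q, ENNReal.ofReal ‖(inner ℂ χ (Λ q χ) : ℂ).re‖ ∂μ
        = ∫⁻ q, ENNReal.ofReal ((inner ℂ χ (Λ q χ) : ℂ).re) ∂μ :=
          lintegral_congr fun q => by rw [Real.norm_of_nonneg (hre q χ)]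
      _ ≤ ENNReal.ofReal (‖T‖ * ‖χ‖ ^ 2) := hA χ
      _ < ⊤ := ENNReal.ofReal_lt_top
  have hIntC : ∀ χ : H, Integrable (fun q => (inner ℂ χ (Λ q χ) : ℂ)) μ := fun χ =>
    ((hIntR χ).ofReal (𝕜 := ℂ)).congr (Filter.Eventually.of_forall fun q => (hC q χ).symm)
  have hIC : ∀ χ : H, ∫ q, (inner ℂ χ (Λ q χ) : ℂ) ∂μ
      = ((∫ q, (inner ℂ χ (Λ q χ) : ℂ).re ∂μ : ℝ) : ℂ) := by
    intro χ
    have h1 : ∫ q, (inner ℂ χ (Λ q χ) : ℂ) ∂μ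
        = ∫ q, (((inner ℂ χ (Λ q χ) : ℂ).re : ℝ) : ℂ) ∂μ :=
      integral_congr_ae (Filter.Eventually.of_forall fun q => hC q χ)
    rw [h1]
    exact integral_ofReal
  intro ψ
  refine ⟨hIntC ψ, ?_⟩
  have hmem : ψ ∈ closure (S : Set H) := by rw [hS.closure_eq]; trivial
  obtain ⟨s, hsS, hs⟩ := mem_closure_iff_seq_limit.mp hmem
  -- quantitative bound
  have hbound : ∀ n, |∫ q, (inner ℂ (s n) (Λ q (s n)) : ℂ).re ∂μ
        - ∫ q, (inner ℂ ψ (Λ q ψ) : ℂ).re ∂μ|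
      ≤ Real.sqrt (‖T‖ * ‖s n - ψ‖ ^ 2)
        * Real.sqrt (2 * (‖T‖ * ‖s n‖ ^ 2) + 2 * (‖T‖ * ‖ψ‖ ^ 2)) := by
    intro n
    set φ := s n with hφ
    have hmsq1 : Measurable fun q =>
        ENNReal.ofReal (Real.sqrt ((inner ℂ (φ - ψ) (Λ q (φ - ψ)) : ℂ).re)) :=
      ENNReal.measurable_ofReal.comp
        (Real.continuous_sqrt.measurable.comp (hgmeas (φ - ψ)))
    have hmsq2 : Measurable fun q =>
        ENNReal.ofReal (Real.sqrt ((inner ℂ φ (Λ q φ) : ℂ).re)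
          + Real.sqrt ((inner ℂ ψ (Λ q ψ) : ℂ).re)) :=
      ENNReal.measurable_ofReal.comp
        ((Real.continuous_sqrt.measurable.comp (hgmeas φ)).add
          (Real.continuous_sqrt.measurable.comp (hgmeas ψ)))
    -- Hölder
    have hHolder : ∫⁻ q, ENNReal.ofReal
          |(inner ℂ φ (Λ q φ) : ℂ).re - (inner ℂ ψ (Λ q ψ) : ℂ).re| ∂μ
        ≤ (∫⁻ q, ENNReal.ofReal ((inner ℂ (φ - ψ) (Λ q (φ - ψ)) : ℂ).re) ∂μ) ^ (1/2:ℝ)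
          * (∫⁻ q, (ENNReal.ofReal (Real.sqrt ((inner ℂ φ (Λ q φ) : ℂ).re)
              + Real.sqrt ((inner ℂ ψ (Λ q ψ) : ℂ).re))) ^ (2:ℝ) ∂μ) ^ (1/2:ℝ) := by
      calc ∫⁻ q, ENNReal.ofReal
            |(inner ℂ φ (Λ q φ) : ℂ).re - (inner ℂ ψ (Λ q ψ) : ℂ).re| ∂μ
          ≤ ∫⁻ q, ENNReal.ofReal (Real.sqrt ((inner ℂ (φ - ψ) (Λ q (φ - ψ)) : ℂ).re))
              * ENNReal.ofReal (Real.sqrt ((inner ℂ φ (Λ q φ) : ℂ).re)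
                + Real.sqrt ((inner ℂ ψ (Λ q ψ) : ℂ).re)) ∂μ := by
            refine lintegral_mono fun q => ?_
            rw [← ENNReal.ofReal_mul (Real.sqrt_nonneg _)]
            exact ENNReal.ofReal_le_ofReal (abs_diff_le' (Λ q) (hpos q) φ ψ)
        _ ≤ (∫⁻ q, (ENNReal.ofReal
              (Real.sqrt ((inner ℂ (φ - ψ) (Λ q (φ - ψ)) : ℂ).re))) ^ (2:ℝ) ∂μ) ^ (1/2:ℝ)
            * (∫⁻ q, (ENNReal.ofReal (Real.sqrt ((inner ℂ φ (Λ q φ) : ℂ).re)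
                + Real.sqrt ((inner ℂ ψ (Λ q ψ) : ℂ).re))) ^ (2:ℝ) ∂μ) ^ (1/2:ℝ) :=
            ENNReal.lintegral_mul_le_Lp_mul_Lq μ ⟨by norm_num, by norm_num, by norm_num⟩
              hmsq1.aemeasurable hmsq2.aemeasurable
        _ = (∫⁻ q, ENNReal.ofReal ((inner ℂ (φ - ψ) (Λ q (φ - ψ)) : ℂ).re) ∂μ) ^ (1/2:ℝ)
            * (∫⁻ q, (ENNReal.ofReal (Real.sqrt ((inner ℂ φ (Λ q φ) : ℂ).re)
                + Real.sqrt ((inner ℂ ψ (Λ q ψ) : ℂ).re))) ^ (2:ℝ) ∂μ) ^ (1/2:ℝ) := by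
            congr 2
            refine lintegral_congr fun q => ?_
            rw [hpow2 _ (Real.sqrt_nonneg _), Real.sq_sqrt (hre q (φ - ψ))]
    -- bound the second factor
    have hf2 : ∫⁻ q, (ENNReal.ofReal (Real.sqrt ((inner ℂ φ (Λ q φ) : ℂ).re)
          + Real.sqrt ((inner ℂ ψ (Λ q ψ) : ℂ).re))) ^ (2:ℝ) ∂μ
        ≤ ENNReal.ofReal (2 * (‖T‖ * ‖φ‖ ^ 2) + 2 * (‖T‖ * ‖ψ‖ ^ 2)) := by
      have hofr2 : ∀ a : ℝ, ENNReal.ofReal (2 * a) = 2 * ENNReal.ofReal a := by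
        intro a
        rw [ENNReal.ofReal_mul (by norm_num : (0:ℝ) ≤ 2)]
        norm_num
      calc ∫⁻ q, (ENNReal.ofReal (Real.sqrt ((inner ℂ φ (Λ q φ) : ℂ).re)
            + Real.sqrt ((inner ℂ ψ (Λ q ψ) : ℂ).re))) ^ (2:ℝ) ∂μ
          ≤ ∫⁻ q, 2 * ENNReal.ofReal ((inner ℂ φ (Λ q φ) : ℂ).re)
              + 2 * ENNReal.ofReal ((inner ℂ ψ (Λ q ψ) : ℂ).re) ∂μ := by
            refine lintegral_mono fun q => ?_
            rw [hpow2 (Real.sqrt ((inner ℂ φ (Λ q φ) : ℂ).re)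
              + Real.sqrt ((inner ℂ ψ (Λ q ψ) : ℂ).re)) (by positivity)]
            calc ENNReal.ofReal ((Real.sqrt ((inner ℂ φ (Λ q φ) : ℂ).re)
                  + Real.sqrt ((inner ℂ ψ (Λ q ψ) : ℂ).re)) ^ 2)
                ≤ ENNReal.ofReal (2 * (inner ℂ φ (Λ q φ) : ℂ).re
                    + 2 * (inner ℂ ψ (Λ q ψ) : ℂ).re) := by
                  refine ENNReal.ofReal_le_ofReal ?_
                  nlinarith [Real.sq_sqrt (hre q φ), Real.sq_sqrt (hre q ψ),
                    Real.sqrt_nonneg ((inner ℂ φ (Λ q φ) : ℂ).re),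
                    Real.sqrt_nonneg ((inner ℂ ψ (Λ q ψ) : ℂ).re),
                    sq_nonneg (Real.sqrt ((inner ℂ φ (Λ q φ) : ℂ).re)
                      - Real.sqrt ((inner ℂ ψ (Λ q ψ) : ℂ).re))]
              _ = 2 * ENNReal.ofReal ((inner ℂ φ (Λ q φ) : ℂ).re)
                    + 2 * ENNReal.ofReal ((inner ℂ ψ (Λ q ψ) : ℂ).re) := by
                  rw [ENNReal.ofReal_add (mul_nonneg (by norm_num) (hre q φ))
                    (mul_nonneg (by norm_num) (hre q ψ)), hofr2, hofr2]
        _ = 2 * ∫⁻ q, ENNReal.ofReal ((inner ℂ φ (Λ q φ) : ℂ).re) ∂μ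
              + 2 * ∫⁻ q, ENNReal.ofReal ((inner ℂ ψ (Λ q ψ) : ℂ).re) ∂μ := by
            rw [lintegral_add_left (((hgmeas φ).ennreal_ofReal).const_mul 2),
              lintegral_const_mul 2 ((hgmeas φ).ennreal_ofReal),
              lintegral_const_mul 2 ((hgmeas ψ).ennreal_ofReal)]
        _ ≤ 2 * ENNReal.ofReal (‖T‖ * ‖φ‖ ^ 2) + 2 * ENNReal.ofReal (‖T‖ * ‖ψ‖ ^ 2) := by
            gcongr
            · exact hA φ
            · exact hA ψ
        _ = ENNReal.ofReal (2 * (‖T‖ * ‖φ‖ ^ 2) + 2 * (‖T‖ * ‖ψ‖ ^ 2)) := by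
            rw [ENNReal.ofReal_add (by positivity) (by positivity), hofr2, hofr2]
    -- combine into an `ofReal` bound
    have hcomb : ∫⁻ q, ENNReal.ofReal
          |(inner ℂ φ (Λ q φ) : ℂ).re - (inner ℂ ψ (Λ q ψ) : ℂ).re| ∂μ
        ≤ ENNReal.ofReal (Real.sqrt (‖T‖ * ‖φ - ψ‖ ^ 2)
            * Real.sqrt (2 * (‖T‖ * ‖φ‖ ^ 2) + 2 * (‖T‖ * ‖ψ‖ ^ 2))) := by
      refine hHolder.trans ?_
      rw [ENNReal.ofReal_mul (Real.sqrt_nonneg _)]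
      have e1 : ∀ X : ℝ, 0 ≤ X →
          ENNReal.ofReal (Real.sqrt X) = (ENNReal.ofReal X) ^ (1/2:ℝ) := by
        intro X hX
        rw [ENNReal.ofReal_rpow_of_nonneg hX (by norm_num), Real.sqrt_eq_rpow]
      rw [e1 (‖T‖ * ‖φ - ψ‖ ^ 2) (by positivity),
        e1 (2 * (‖T‖ * ‖φ‖ ^ 2) + 2 * (‖T‖ * ‖ψ‖ ^ 2)) (by positivity)]
      exact mul_le_mul' (ENNReal.rpow_le_rpow (hA (φ - ψ)) (by norm_num))
        (ENNReal.rpow_le_rpow hf2 (by norm_num))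
    -- back to real integrals
    have hintsub : Integrable
        (fun q => (inner ℂ φ (Λ q φ) : ℂ).re - (inner ℂ ψ (Λ q ψ) : ℂ).re) μ :=
      (hIntR φ).sub (hIntR ψ)
    have e2 : ∫ q, |(inner ℂ φ (Λ q φ) : ℂ).re - (inner ℂ ψ (Λ q ψ) : ℂ).re| ∂μ
        = (∫⁻ q, ENNReal.ofReal
            |(inner ℂ φ (Λ q φ) : ℂ).re - (inner ℂ ψ (Λ q ψ) : ℂ).re| ∂μ).toReal :=
      integral_eq_lintegral_of_nonneg_ae (Filter.Eventually.of_forall fun q => abs_nonneg _)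
        hintsub.abs.aestronglyMeasurable
    calc |∫ q, (inner ℂ φ (Λ q φ) : ℂ).re ∂μ - ∫ q, (inner ℂ ψ (Λ q ψ) : ℂ).re ∂μ|
        = |∫ q, ((inner ℂ φ (Λ q φ) : ℂ).re - (inner ℂ ψ (Λ q ψ) : ℂ).re) ∂μ| := by
          rw [integral_sub (hIntR φ) (hIntR ψ)]
      _ ≤ ∫ q, |(inner ℂ φ (Λ q φ) : ℂ).re - (inner ℂ ψ (Λ q ψ) : ℂ).re| ∂μ := by
          simpa [Real.norm_eq_abs] using
            norm_integral_le_integral_norm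
              (fun q => (inner ℂ φ (Λ q φ) : ℂ).re - (inner ℂ ψ (Λ q ψ) : ℂ).re) (μ := μ)
      _ = _ := e2
      _ ≤ Real.sqrt (‖T‖ * ‖φ - ψ‖ ^ 2)
            * Real.sqrt (2 * (‖T‖ * ‖φ‖ ^ 2) + 2 * (‖T‖ * ‖ψ‖ ^ 2)) :=
          ENNReal.toReal_le_of_le_ofReal (by positivity) hcomb
  -- the bound tends to zero
  have hd0 : Filter.Tendsto (fun n => ‖s n - ψ‖) Filter.atTop (nhds 0) := by
    have := tendsto_iff_norm_sub_tendsto_zero.mp hs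
    simpa using this
  have hzero : Filter.Tendsto (fun n => Real.sqrt (‖T‖ * ‖s n - ψ‖ ^ 2)
      * Real.sqrt (2 * (‖T‖ * ‖s n‖ ^ 2) + 2 * (‖T‖ * ‖ψ‖ ^ 2))) Filter.atTop (nhds 0) := by
    have h1 : Filter.Tendsto (fun n => Real.sqrt (‖T‖ * ‖s n - ψ‖ ^ 2)) Filter.atTop
        (nhds 0) := by
      have h := (Real.continuous_sqrt.tendsto (‖T‖ * 0 ^ 2)).comp
        ((hd0.pow 2).const_mul ‖T‖)
      have h0 : Real.sqrt (‖T‖ * 0 ^ 2) = 0 := by simp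
      rw [h0] at h
      exact h
    have h2 : Filter.Tendsto
        (fun n => Real.sqrt (2 * (‖T‖ * ‖s n‖ ^ 2) + 2 * (‖T‖ * ‖ψ‖ ^ 2))) Filter.atTop
        (nhds (Real.sqrt (2 * (‖T‖ * ‖ψ‖ ^ 2) + 2 * (‖T‖ * ‖ψ‖ ^ 2)))) :=
      (Real.continuous_sqrt.tendsto _).comp
        ((((hs.norm.pow 2).const_mul ‖T‖).const_mul 2).add tendsto_const_nhds)
    have := h1.mul h2
    simpa using this
  have hdist : Filter.Tendsto (fun n => ∫ q, (inner ℂ (s n) (Λ q (s n)) : ℂ).re ∂μ)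
      Filter.atTop (nhds (∫ q, (inner ℂ ψ (Λ q ψ) : ℂ).re ∂μ)) := by
    rw [tendsto_iff_dist_tendsto_zero]
    refine squeeze_zero (fun n => dist_nonneg) (fun n => ?_) hzero
    rw [Real.dist_eq]
    exact hbound n
  have hlim1 : Filter.Tendsto (fun n => (inner ℂ (s n) (T (s n)) : ℂ)) Filter.atTop
      (nhds (inner ℂ ψ (T ψ))) :=
    ((continuous_id.inner T.continuous).tendsto ψ).comp hs
  have heq : ∀ n, (inner ℂ (s n) (T (s n)) : ℂ)
      = ((∫ q, (inner ℂ (s n) (Λ q (s n)) : ℂ).re ∂μ : ℝ) : ℂ) := fun n => by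
    rw [(hT (s n) (hsS n)).2, hIC (s n)]
  have hlim2 : Filter.Tendsto
      (fun n => ((∫ q, (inner ℂ (s n) (Λ q (s n)) : ℂ).re ∂μ : ℝ) : ℂ)) Filter.atTop
      (nhds ((∫ q, (inner ℂ ψ (Λ q ψ) : ℂ).re ∂μ : ℝ) : ℂ)) :=
    (Complex.continuous_ofReal.tendsto _).comp hdist
  have hfinal : (inner ℂ ψ (T ψ) : ℂ) = ((∫ q, (inner ℂ ψ (Λ q ψ) : ℂ).re ∂μ : ℝ) : ℂ) :=
    tendsto_nhds_unique (Filter.Tendsto.congr heq hlim1) hlim2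
  rw [hIC ψ]
  exact hfinal
end

section
/- If Λ : M → B(H) is weakly measurable and Λ(q) is positive and bijective for every q ∈ M, then the map q ↦ Λ(q)⁻¹ is weakly measurable. -/
open scoped ComplexOrder


lemma nonneg_complex_eq_re {z : ℂ} (h : 0 ≤ z) : z = (z.re : ℂ) ∧ 0 ≤ z.re := by
  rw [Complex.le_def] at h
  refine ⟨Complex.ext rfl ?_, h.1⟩
  simpa using h.2.symm

lemma pos_symm {H : Type*} [NormedAddCommGroup H] [InnerProductSpace ℂ H]
    (A : H →L[ℂ] H) (hA : ∀ x : H, 0 ≤ (inner ℂ x (A x) : ℂ)) (x y : H) :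
    (inner ℂ (A x) y : ℂ) = inner ℂ x (A y) := by
  have hsym : LinearMap.IsSymmetric (A : H →ₗ[ℂ] H) := by
    rw [LinearMap.isSymmetric_iff_inner_map_self_real]
    intro v
    have h := (nonneg_complex_eq_re (hA v)).1
    have hc : (inner ℂ ((A : H →ₗ[ℂ] H) v) v : ℂ) = (starRingEnd ℂ) (inner ℂ v (A v) : ℂ) :=
      (inner_conj_symm _ _).symm
    rw [hc, h]
    simp
  exact hsym x y

lemma pos_cs {H : Type*} [NormedAddCommGroup H] [InnerProductSpace ℂ H]
    (A : H →L[ℂ] H) (hA : ∀ x : H, 0 ≤ (inner ℂ x (A x) : ℂ)) (x y : H) :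
    ‖(inner ℂ x (A y) : ℂ)‖ * ‖(inner ℂ y (A x) : ℂ)‖
      ≤ (inner ℂ x (A x) : ℂ).re * (inner ℂ y (A y) : ℂ).re := by
  letI c : PreInnerProductSpace.Core ℂ H :=
    { inner := fun a b => (inner ℂ a (A b) : ℂ)
      conj_inner_symm := fun a b => by
        simp only [inner_conj_symm]
        exact pos_symm A hA a b
      re_inner_nonneg := fun a => by
        simpa using (nonneg_complex_eq_re (hA a)).2
      add_left := fun a b z => inner_add_left a b (A z)
      smul_left := fun a b r => inner_smul_left a (A b) r }
  have h := InnerProductSpace.Core.inner_mul_inner_self_le (𝕜 := ℂ) (F := H) (c := c) x y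
  exact h

/-- Cauchy–Schwarz consequence: `‖⟪φ, ψ⟫‖² ≤ re⟪φ, Aφ⟫ · re⟪Bψ, A(Bψ)⟫` when `A ∘ B = id`. -/
lemma key_cs {H : Type*} [NormedAddCommGroup H] [InnerProductSpace ℂ H]
    (A : H →L[ℂ] H) (hA : ∀ x : H, 0 ≤ (inner ℂ x (A x) : ℂ)) (φ ξ ψ : H)
    (hξ : A ξ = ψ) :
    ‖(inner ℂ φ ψ : ℂ)‖ ^ 2 ≤ (inner ℂ φ (A φ) : ℂ).re * (inner ℂ ξ (A ξ) : ℂ).re := by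
  have h := pos_cs A hA φ ξ
  have h1 : (inner ℂ φ (A ξ) : ℂ) = inner ℂ φ ψ := by rw [hξ]
  have h2 : ‖(inner ℂ ξ (A φ) : ℂ)‖ = ‖(inner ℂ φ ψ : ℂ)‖ := by
    have : (inner ℂ ξ (A φ) : ℂ) = (starRingEnd ℂ) (inner ℂ φ ψ : ℂ) := by
      rw [← inner_conj_symm, pos_symm A hA φ ξ, hξ]
    rw [this]
    exact RCLike.norm_conj _
  rw [h1, h2] at h
  calc ‖(inner ℂ φ ψ : ℂ)‖ ^ 2 = ‖(inner ℂ φ ψ : ℂ)‖ * ‖(inner ℂ φ ψ : ℂ)‖ := sq _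
    _ ≤ _ := h

/-- If `Λ` is weakly measurable and each `Λ(q)` is positive and bijective, then the
(pointwise) inverse family is weakly measurable. -/
theorem stmt_6 {H : Type*} [NormedAddCommGroup H] [InnerProductSpace ℂ H]
    [CompleteSpace H] [TopologicalSpace.SeparableSpace H]
    {M : Type*} [MeasurableSpace M]
    (Λ inv : M → H →L[ℂ] H)
    (hmeas : ∀ ψ : H, Measurable fun q => (inner ℂ ψ (Λ q ψ) : ℂ))
    (hpos : ∀ q, ∀ ψ : H, 0 ≤ (inner ℂ ψ (Λ q ψ) : ℂ))
    (hbij : ∀ q, Function.Bijective (Λ q))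
    (hinv : ∀ q, (Λ q).comp (inv q) = ContinuousLinearMap.id ℂ H ∧
        (inv q).comp (Λ q) = ContinuousLinearMap.id ℂ H) :
    ∀ ψ : H, Measurable fun q => (inner ℂ ψ (inv q ψ) : ℂ) := by
  intro ψ
  haveI : Nonempty H := ⟨0⟩
  set u : ℕ → H := TopologicalSpace.denseSeq H with hu_def
  have hu : DenseRange u := TopologicalSpace.denseRange_denseSeq H
  set g : ℕ → M → ENNReal := fun n q =>
    ENNReal.ofReal (‖(inner ℂ (u n) ψ : ℂ)‖ ^ 2 / (inner ℂ (u n) (Λ q (u n)) : ℂ).re) with hg_def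
  have key : ∀ q, (inner ℂ ψ (inv q ψ) : ℂ) = (((⨆ n, g n q).toReal : ℝ) : ℂ) := by
    intro q
    set A := Λ q
    set B := inv q
    have hAB : ∀ v : H, A (B v) = v := by
      intro v
      have := congrArg (fun T : H →L[ℂ] H => T v) (hinv q).1
      simpa using this
    set r : ℝ := (inner ℂ (B ψ) (A (B ψ)) : ℂ).re with hr_def
    have hr0 : 0 ≤ r := (nonneg_complex_eq_re (hpos q (B ψ))).2
    have hBψ : (inner ℂ (B ψ) (A (B ψ)) : ℂ) = (r : ℂ) := (nonneg_complex_eq_re (hpos q (B ψ))).1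
    have hBψ' : (inner ℂ (B ψ) ψ : ℂ) = (r : ℂ) := by
      rw [show (inner ℂ (B ψ) ψ : ℂ) = inner ℂ (B ψ) (A (B ψ)) from by rw [hAB ψ], hBψ]
    have hψB : (inner ℂ ψ (B ψ) : ℂ) = (r : ℂ) := by
      rw [← inner_conj_symm, hBψ']
      simp
    -- Cauchy–Schwarz bound for every φ
    have hCS : ∀ φ : H, ‖(inner ℂ φ ψ : ℂ)‖ ^ 2 ≤ (inner ℂ φ (A φ) : ℂ).re * r := by
      intro φ
      simpa [hr_def] using key_cs A (hpos q) φ (B ψ) ψ (hAB ψ)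
    -- the supremum equals `ofReal r`
    have hsup : (⨆ n, g n q) = ENNReal.ofReal r := by
      apply le_antisymm
      · refine iSup_le fun n => ?_
        set d : ℝ := (inner ℂ (u n) (A (u n)) : ℂ).re with hd_def
        have hd0 : 0 ≤ d := (nonneg_complex_eq_re (hpos q (u n))).2
        have hb := hCS (u n)
        apply ENNReal.ofReal_le_ofReal
        rcases eq_or_lt_of_le hd0 with h | h
        · have hnum : ‖(inner ℂ (u n) ψ : ℂ)‖ ^ 2 = 0 := by
            have : ‖(inner ℂ (u n) ψ : ℂ)‖ ^ 2 ≤ 0 := by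
              calc ‖(inner ℂ (u n) ψ : ℂ)‖ ^ 2 ≤ d * r := hb
                _ = 0 := by rw [← h, zero_mul]
            exact le_antisymm this (sq_nonneg _)
          show ‖(inner ℂ (u n) ψ : ℂ)‖ ^ 2 / d ≤ r
          rw [hnum, zero_div]
          exact hr0
        · show ‖(inner ℂ (u n) ψ : ℂ)‖ ^ 2 / d ≤ r
          rw [div_le_iff₀ h]
          calc ‖(inner ℂ (u n) ψ : ℂ)‖ ^ 2 ≤ d * r := hb
            _ = r * d := mul_comm _ _
      · rcases eq_or_lt_of_le hr0 with hr | hr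
        · rw [← hr]
          simp
        · -- continuity argument
          set f : H → ℝ := fun φ => ‖(inner ℂ φ ψ : ℂ)‖ ^ 2 / (inner ℂ φ (A φ) : ℂ).re with hf_def
          have hfval : f (B ψ) = r := by
            have h1 : ‖(inner ℂ (B ψ) ψ : ℂ)‖ ^ 2 = r ^ 2 := by
              rw [hBψ', Complex.norm_real, Real.norm_eq_abs, abs_of_nonneg hr0]
            simp only [hf_def]
            rw [h1, ← hr_def, sq]
            rw [mul_div_assoc, div_self (ne_of_gt hr), mul_one]
          have hfc : ContinuousAt f (B ψ) := by
            apply ContinuousAt.div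
            · exact ((continuous_id.inner continuous_const).norm.pow 2).continuousAt
            · exact (Complex.continuous_re.comp
                (continuous_id.inner A.continuous)).continuousAt
            · rw [← hr_def]; exact ne_of_gt hr
          refine ENNReal.le_of_forall_pos_le_add fun ε hε _ => ?_
          set δ : ℝ := min (ε : ℝ) r with hδ_def
          have hδ0 : 0 < δ := lt_min (by exact_mod_cast hε) hr
          have hδr : δ ≤ r := min_le_right _ _
          have hev : ∀ᶠ φ in nhds (B ψ), r - δ < f φ := by
            have : r - δ < f (B ψ) := by rw [hfval]; linarith
            exact hfc.eventually (eventually_gt_nhds this)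
          obtain ⟨φ₁, hφ₁, n, rfl⟩ :
              ∃ φ₁, φ₁ ∈ {φ : H | r - δ < f φ} ∧ ∃ n, u n = φ₁ := by
            rcases mem_closure_iff_nhds.mp (hu (B ψ)) _ hev with ⟨φ₁, h1, h2⟩
            exact ⟨φ₁, h1, Set.mem_range.mp h2⟩
          have hle1 : ENNReal.ofReal (r - δ) ≤ g n q := by
            apply ENNReal.ofReal_le_ofReal
            exact le_of_lt hφ₁
          calc ENNReal.ofReal r ≤ ENNReal.ofReal (r - δ) + ENNReal.ofReal δ := by
                rw [← ENNReal.ofReal_add (by linarith) (le_of_lt hδ0)]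
                simp
            _ ≤ (⨆ m, g m q) + ENNReal.ofReal δ :=
                add_le_add_left (hle1.trans (le_iSup (fun m => g m q) n)) _
            _ ≤ (⨆ m, g m q) + (ε : ENNReal) := by
                apply add_le_add_right
                rw [← ENNReal.ofReal_coe_nnreal]
                exact ENNReal.ofReal_le_ofReal (min_le_left _ _)
    rw [hsup, ENNReal.toReal_ofReal hr0, hψB]
  have heq : (fun q => (inner ℂ ψ (inv q ψ) : ℂ))
      = fun q => (((⨆ n, g n q).toReal : ℝ) : ℂ) := funext key
  rw [heq]
  apply Complex.continuous_ofReal.measurable.comp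
  apply Measurable.ennreal_toReal
  apply Measurable.iSup
  intro n
  apply ENNReal.measurable_ofReal.comp
  exact (measurable_const.div (Complex.measurable_re.comp (hmeas (u n))))
end

section
/- Let H be a self-adjoint operator on a separable Hilbert space ℋ, and Λ : Q → B(ℋ) a weakly measurable family of bounded positive operators on a σ-finite Borel measure space (Q, μ) satisfying ∫_Q Λ(q) dμ(q) = λ I weakly, for a constant λ > 0. For t₀ < t₁ < … < tₙ and q₁,…,qₙ ∈ Q, define Lₙ = e^{−λ(tₙ−t₀)/2} Λ(qₙ)^{1/2} e^{−iH(tₙ−t_{n−1})} Λ(q_{n−1})^{1/2} ⋯ Λ(q₁)^{1/2} e^{−iH(t₁−t₀)} (and Lₙ = 0 if the times are not increasing), with L₀ = I. Then for every n ≥ 1 and every ψ ∈ ℋ, ∫_ℝ dtₙ ∫_Q μ(dqₙ) ⟨ψ, Lₙ* Lₙ ψ⟩ = ⟨ψ, L*_{n−1} L_{n−1} ψ⟩. -/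
set_option maxHeartbeats 1000000


open scoped ComplexOrder Classical
open MeasureTheory

/-- The operator product `Λ(qₙ)^{1/2} e^{−iH(tₙ−t_{n−1})} ⋯ Λ(q₁)^{1/2} e^{−iH(t₁−t₀)}`,
built from the unitary group `U` (representing `t ↦ e^{−iHt}`) and collapse operators
`C q = Λ(q)^{1/2}`. -/
noncomputable def Lop {H Q : Type*} [NormedAddCommGroup H] [InnerProductSpace ℂ H]
    [CompleteSpace H]
    (U : ℝ → H →L[ℂ] H) (C : Q → H →L[ℂ] H) (t : ℕ → ℝ) (q : ℕ → Q) : ℕ → H →L[ℂ] H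
  | 0 => 1
  | n + 1 => (C (q (n + 1))).comp ((U (t (n + 1) - t n)).comp (Lop U C t q n))

/-- `Lₙ = 1_{t₀<t₁<⋯<tₙ} e^{−λ(tₙ−t₀)/2} Λ(qₙ)^{1/2} e^{−iH(tₙ−t_{n−1})} ⋯
Λ(q₁)^{1/2} e^{−iH(t₁−t₀)}`; it is `0` if the times are not increasing. -/
noncomputable def Lfull {H Q : Type*} [NormedAddCommGroup H] [InnerProductSpace ℂ H]
    [CompleteSpace H]
    (U : ℝ → H →L[ℂ] H) (C : Q → H →L[ℂ] H) (l : ℝ) (t : ℕ → ℝ) (q : ℕ → Q)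
    (n : ℕ) : H →L[ℂ] H :=
  if ∀ i, i < n → t i < t (i + 1) then
    (Real.exp (-(l * (t n - t 0)) / 2) : ℂ) • Lop U C t q n
  else 0

section Aux
variable {H Q : Type*} [NormedAddCommGroup H] [InnerProductSpace ℂ H] [CompleteSpace H]

lemma Lop_congr (U : ℝ → H →L[ℂ] H) (C : Q → H →L[ℂ] H) {t t' : ℕ → ℝ} {q q' : ℕ → Q}
    (k : ℕ) (ht : ∀ i ≤ k, t' i = t i) (hq : ∀ i ≤ k, q' i = q i) :
    Lop U C t' q' k = Lop U C t q k := by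
  induction k with
  | zero => rfl
  | succ m ih =>
    have h1 := ih (fun i hi => ht i (hi.trans (Nat.le_succ m)))
      (fun i hi => hq i (hi.trans (Nat.le_succ m)))
    simp [Lop, ht (m+1) le_rfl, ht m (Nat.le_succ m), hq (m+1) le_rfl, h1]

lemma sq_norm_apply {A B : H →L[ℂ] H} (hpos : ∀ ψ : H, 0 ≤ (inner ℂ ψ (A ψ) : ℂ))
    (hAB : A * A = B) (x : H) : (‖A x‖ : ℝ) ^ 2 = (inner ℂ x (B x) : ℂ).re := by
  have hsym : IsSelfAdjoint A := by
    apply LinearMap.IsSymmetric.isSelfAdjoint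
    rw [LinearMap.isSymmetric_iff_inner_map_self_real]
    intro v
    have him : (inner ℂ v (A v) : ℂ).im = 0 := by
      have := (Complex.le_def.mp (hpos v)).2
      simpa using this.symm
    have hc : (starRingEnd ℂ) (inner ℂ v (A v) : ℂ) = (inner ℂ v (A v) : ℂ) :=
      Complex.conj_eq_iff_im.mpr him
    simp only [ContinuousLinearMap.coe_coe]
    rw [← inner_conj_symm (A v) v, hc, hc]
  have hadj : ContinuousLinearMap.adjoint A = A :=
    ContinuousLinearMap.isSelfAdjoint_iff'.mp hsym
  have h2 : (inner ℂ (A x) (A x) : ℂ) = inner ℂ x (B x) := by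
    rw [← ContinuousLinearMap.adjoint_inner_right A x (A x), hadj, ← hAB,
      ContinuousLinearMap.mul_apply]
  rw [← inner_self_eq_norm_sq (𝕜 := ℂ) (A x), h2]
  rfl

lemma exp_int (l a c : ℝ) (hl : 0 < l) :
    (∫ s in Set.Ioi a, Real.exp (-(l * (s - c)))) = Real.exp (-(l * (a - c))) / l := by
  have hderiv : ∀ x ∈ Set.Ici a, HasDerivAt (fun s => -Real.exp (-(l * (s - c))) / l)
      (Real.exp (-(l * (x - c)))) x := by
    intro x _
    have h1 : HasDerivAt (fun s : ℝ => -(l * (s - c))) (-l) x := by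
      simpa [Pi.neg_def] using (((hasDerivAt_id x).sub_const c).const_mul l).neg
    have h4 := (h1.exp.div_const l).neg
    have heq : -(Real.exp (-(l * (x - c))) * -l / l) = Real.exp (-(l * (x - c))) := by
      field_simp
    rw [heq] at h4
    simpa [neg_div, Pi.neg_def] using h4
  have hint : IntegrableOn (fun s => Real.exp (-(l * (s - c)))) (Set.Ioi a) := by
    have he : (fun s => Real.exp (-(l * (s - c))))
        = fun s => Real.exp (l * c) * Real.exp (-l * s) := by
      funext s; rw [← Real.exp_add]; ring_nf
    rw [he]
    exact (exp_neg_integrableOn_Ioi a hl).const_mul _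
  have htend : Filter.Tendsto (fun s => -Real.exp (-(l * (s - c))) / l)
      Filter.atTop (nhds 0) := by
    have h1 : Filter.Tendsto (fun s : ℝ => -(l * (s - c))) Filter.atTop Filter.atBot := by
      apply Filter.tendsto_neg_atBot_iff.mpr
      exact (Filter.tendsto_atTop_add_const_right _ (-c) Filter.tendsto_id).const_mul_atTop hl
    have h2 := Real.tendsto_exp_atBot.comp h1
    have h3 := (h2.neg).div_const l
    simpa using h3
  have := integral_Ioi_of_hasDerivAt_of_tendsto' hderiv hint htend
  rw [this]
  field_simp
  ring

end Aux

/-- The fundamental consistency property of the GRWf operators: integrating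
`⟨ψ, Lₙ* Lₙ ψ⟩ = ‖Lₙψ‖²` over the last flash `(tₙ, qₙ)` gives `‖L_{n−1}ψ‖²`,
assuming the flash rate operators `Λ` are positive, weakly measurable, with
`∫ Λ(q) dμ(q) = λ I` weakly, `C q` is the positive square root of `Λ q`, and
`U` is a (weakly continuous) one-parameter unitary group `e^{−iHt}` generated by the
self-adjoint operator `H` (ℏ = 1). -/
theorem stmt_12 {H Q : Type*} [NormedAddCommGroup H] [InnerProductSpace ℂ H]
    [CompleteSpace H] [TopologicalSpace.SeparableSpace H]
    [MeasurableSpace Q] (μ : Measure Q) [SigmaFinite μ]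
    (U : ℝ → H →L[ℂ] H)
    (hUunitary : ∀ s, U s ∈ unitary (H →L[ℂ] H))
    (hU0 : U 0 = 1)
    (hUadd : ∀ s u : ℝ, U (s + u) = U s * U u)
    (hUcont : ∀ φ ψ : H, Continuous fun s => (inner ℂ φ (U s ψ) : ℂ))
    (Λ C : Q → H →L[ℂ] H)
    (hΛmeas : ∀ ψ : H, Measurable fun r => (inner ℂ ψ (Λ r ψ) : ℂ))
    (hΛpos : ∀ r, ∀ ψ : H, 0 ≤ (inner ℂ ψ (Λ r ψ) : ℂ))
    (hCpos : ∀ r, ∀ ψ : H, 0 ≤ (inner ℂ ψ (C r ψ) : ℂ))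
    (hC : ∀ r, C r * C r = Λ r)
    (l : ℝ) (hl : 0 < l)
    (hΛint : ∀ ψ : H, Integrable (fun r => (inner ℂ ψ (Λ r ψ) : ℂ)) μ)
    (hΛnorm : ∀ ψ : H, ∫ r, (inner ℂ ψ (Λ r ψ) : ℂ) ∂μ = (l : ℂ) * (‖ψ‖ : ℂ) ^ 2)
    (t : ℕ → ℝ) (q : ℕ → Q) (n : ℕ) (ψ : H) :
    ∫ s : ℝ, ∫ r : Q,
        ‖Lfull U C l (Function.update t (n + 1) s) (Function.update q (n + 1) r)
            (n + 1) ψ‖ ^ 2 ∂μ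
      = ‖Lfull U C l t q n ψ‖ ^ 2 := by
  set φ := Lop U C t q n ψ with hφ
  by_cases hinc : ∀ i, i < n → t i < t (i + 1)
  · -- increasing case
    have hLop : ∀ s r, Lop U C (Function.update t (n+1) s) (Function.update q (n+1) r) n
        = Lop U C t q n := fun s r =>
      Lop_congr _ _ n (fun i hi => Function.update_of_ne (by omega) _ _)
        (fun i hi => Function.update_of_ne (by omega) _ _)
    have hLf : ∀ s r, Lfull U C l (Function.update t (n+1) s) (Function.update q (n+1) r)
        (n+1) ψ = if t n < s then
          (Real.exp (-(l * (s - t 0)) / 2) : ℂ) • (C r) ((U (s - t n)) φ) else 0 := by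
      intro s r
      by_cases hs : t n < s
      · rw [Lfull, if_pos, if_pos hs]
        · have ht0 : Function.update t (n+1) s 0 = t 0 := Function.update_of_ne (by omega) _ _
          have htn : Function.update t (n+1) s n = t n := Function.update_of_ne (by omega) _ _
          simp [Lop, hLop, Function.update_self, ht0, htn, hφ]
        · intro i hi
          rcases Nat.lt_or_ge i n with h | h
          · rw [Function.update_of_ne (by omega), Function.update_of_ne (by omega)]
            exact hinc i h
          · have : i = n := by omega
            subst this
            rw [Function.update_of_ne (by omega), Function.update_self]
            exact hs
      · have hnc : ¬ ∀ i, i < n + 1 → Function.update t (n+1) s i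
            < Function.update t (n+1) s (i + 1) := by
          intro hcon
          have := hcon n (by omega)
          rw [Function.update_of_ne (by omega), Function.update_self] at this
          exact hs this
        rw [Lfull, if_neg hnc, if_neg hs]
        simp
    have key : ∀ s : ℝ,
        (∫ r, ‖Lfull U C l (Function.update t (n + 1) s) (Function.update q (n + 1) r)
            (n + 1) ψ‖ ^ 2 ∂μ)
        = Set.indicator (Set.Ioi (t n))
            (fun s => Real.exp (-(l * (s - t 0))) * (l * ‖φ‖ ^ 2)) s := by
      intro s
      by_cases hs : t n < s
      · rw [Set.indicator_of_mem (Set.mem_Ioi.mpr hs)]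
        set x := (U (s - t n)) φ with hx
        have hnx : ‖x‖ = ‖φ‖ :=
          ContinuousLinearMap.norm_map_of_mem_unitary (hUunitary _) φ
        have hpt : ∀ r, ‖Lfull U C l (Function.update t (n + 1) s)
            (Function.update q (n + 1) r) (n + 1) ψ‖ ^ 2
            = Real.exp (-(l * (s - t 0))) * (inner ℂ x (Λ r x) : ℂ).re := by
          intro r
          rw [hLf s r, if_pos hs, norm_smul, ← hx, mul_pow,
            ← sq_norm_apply (hCpos r) (hC r) x]
          congr 1
          have hnc : ‖(Real.exp (-(l * (s - t 0)) / 2) : ℂ)‖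
              = Real.exp (-(l * (s - t 0)) / 2) := by
            rw [Complex.norm_real, Real.norm_eq_abs, abs_of_pos (Real.exp_pos _)]
          rw [hnc, sq, ← Real.exp_add]
          ring_nf
        simp only [hpt]
        rw [MeasureTheory.integral_const_mul]
        have hre : ∫ r, (inner ℂ x (Λ r x) : ℂ).re ∂μ = l * ‖x‖ ^ 2 := by
          have h1 : ∫ r, RCLike.re (inner ℂ x (Λ r x) : ℂ) ∂μ
              = RCLike.re (∫ r, (inner ℂ x (Λ r x) : ℂ) ∂μ) := integral_re (hΛint x)
          simp only [RCLike.re_to_complex] at h1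
          rw [h1, hΛnorm x, ← Complex.ofReal_pow, ← Complex.ofReal_mul, Complex.ofReal_re]
        rw [hre, hnx]
      · rw [Set.indicator_of_notMem (by simpa using hs)]
        have h0 : ∀ r, ‖Lfull U C l (Function.update t (n + 1) s)
            (Function.update q (n + 1) r) (n + 1) ψ‖ ^ 2 = 0 := by
          intro r; rw [hLf s r, if_neg hs]; simp
        simp only [h0, integral_zero]
    simp only [key]
    rw [integral_indicator measurableSet_Ioi]
    rw [MeasureTheory.integral_mul_const, exp_int l (t n) (t 0) hl]
    rw [Lfull, if_pos hinc, ContinuousLinearMap.smul_apply, norm_smul]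
    have hnc : ‖(Real.exp (-(l * (t n - t 0)) / 2) : ℂ)‖
        = Real.exp (-(l * (t n - t 0)) / 2) := by
      rw [Complex.norm_real, Real.norm_eq_abs, abs_of_pos (Real.exp_pos _)]
    rw [hnc, mul_pow, sq (Real.exp _), ← Real.exp_add, ← hφ]
    field_simp
    ring_nf
  · -- not increasing: both sides vanish
    have hLf0 : ∀ s r, Lfull U C l (Function.update t (n+1) s)
        (Function.update q (n+1) r) (n+1) ψ = 0 := by
      intro s r
      push_neg at hinc
      obtain ⟨i, hi, hti⟩ := hinc
      have hnc : ¬ ∀ j, j < n + 1 → Function.update t (n+1) s j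
          < Function.update t (n+1) s (j + 1) := by
        intro hcon
        have := hcon i (by omega)
        rw [Function.update_of_ne (by omega), Function.update_of_ne (by omega)] at this
        exact absurd this (not_lt.mpr hti)
      rw [Lfull, if_neg hnc]
      simp
    simp only [hLf0]
    rw [Lfull, if_neg hinc]
    simp
end

section
/- Let W : {(s,t) : t₀ ≤ s ≤ t} → B(H) be a weakly measurable family of bounded operators satisfying, for all ψ and all t ≥ s, ⟨ψ, (W_s^{t*}W_s^t − I)ψ⟩ = −∫_s^t ⟨W_s^{t'}ψ, Λ(t') W_s^{t'}ψ⟩ dt', where each Λ(t') is a positive bounded operator with t' ↦ Λ(t') weakly measurable. Then: (a) W_s^{t*}W_s^t ≤ I for all t ≥ s; (b) t ↦ W_s^{t*}W_s^t is monotonically decreasing in the operator order; (c) there exists a unique positive bounded operator T_s with ⟨ψ, T_sψ⟩ = lim_{t→∞} ⟨ψ, W_s^{t*}W_s^tψ⟩ for all ψ, and T_s = I − ∫_s^∞ W_s^{t'*} Λ(t') W_s^{t'} dt' (as a weak integral). -/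
open scoped ComplexOrder
open MeasureTheory

/-- For a weakly measurable family `W_s^t` satisfying the weak identity
`⟨ψ,(W_s^{t*}W_s^t − I)ψ⟩ = −∫_s^t ⟨W_s^{t'}ψ, Λ(t') W_s^{t'}ψ⟩ dt'` with `Λ(t') ≥ 0`:
(a) `W_s^{t*}W_s^t ≤ I`; (b) `t ↦ W_s^{t*}W_s^t` is decreasing; (c) there is a unique
positive bounded `T_s` with `⟨ψ,T_sψ⟩ = lim_{t→∞}⟨ψ,W_s^{t*}W_s^tψ⟩`, and
`T_s = I − ∫_s^∞ W_s^{t'*}Λ(t')W_s^{t'} dt'` weakly. (Note `⟨ψ, W_s^{t*}W_s^t ψ⟩ =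
‖W_s^t ψ‖²`.) -/
theorem stmt_13 {H : Type*} [NormedAddCommGroup H] [InnerProductSpace ℂ H]
    [CompleteSpace H] [TopologicalSpace.SeparableSpace H]
    (t₀ : ℝ) (W : ℝ → ℝ → H →L[ℂ] H) (Λ : ℝ → H →L[ℂ] H)
    (hΛpos : ∀ u, ∀ ψ : H, 0 ≤ (inner ℂ ψ (Λ u ψ) : ℂ))
    (hΛmeas : ∀ φ ψ : H, Measurable fun u => (inner ℂ φ (Λ u ψ) : ℂ))
    (hWmeas : ∀ φ ψ : H, Measurable fun p : ℝ × ℝ => (inner ℂ φ (W p.1 p.2 ψ) : ℂ))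
    (hWint : ∀ s, t₀ ≤ s → ∀ t, s ≤ t → ∀ ψ : H,
        IntervalIntegrable
          (fun u => ((inner ℂ (W s u ψ) (Λ u (W s u ψ)) : ℂ)).re) volume s t)
    (hW : ∀ s, t₀ ≤ s → ∀ t, s ≤ t → ∀ ψ : H,
        ‖W s t ψ‖ ^ 2 - ‖ψ‖ ^ 2
          = -∫ u in s..t, ((inner ℂ (W s u ψ) (Λ u (W s u ψ)) : ℂ)).re) :
    -- (a) W_s^{t*} W_s^t ≤ I
    (∀ s, t₀ ≤ s → ∀ t, s ≤ t → ∀ ψ : H, ‖W s t ψ‖ ≤ ‖ψ‖) ∧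
    -- (b) t ↦ W_s^{t*} W_s^t is monotonically decreasing in the operator order
    (∀ s, t₀ ≤ s → ∀ t₁ t₂, s ≤ t₁ → t₁ ≤ t₂ → ∀ ψ : H,
        ‖W s t₂ ψ‖ ≤ ‖W s t₁ ψ‖) ∧
    -- (c) existence and uniqueness of the positive limit operator T_s
    (∀ s, t₀ ≤ s → ∃! T : H →L[ℂ] H,
        (∀ ψ : H, 0 ≤ (inner ℂ ψ (T ψ) : ℂ)) ∧
        (∀ ψ : H, Filter.Tendsto (fun t => ‖W s t ψ‖ ^ 2) Filter.atTop
            (nhds ((inner ℂ ψ (T ψ) : ℂ)).re))) ∧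
    -- (c') the limit operator is I minus the weak integral over (s, ∞)
    (∀ s, t₀ ≤ s → ∀ T : H →L[ℂ] H,
        ((∀ ψ : H, 0 ≤ (inner ℂ ψ (T ψ) : ℂ)) ∧
         (∀ ψ : H, Filter.Tendsto (fun t => ‖W s t ψ‖ ^ 2) Filter.atTop
            (nhds ((inner ℂ ψ (T ψ) : ℂ)).re))) →
        ∀ ψ : H,
          IntegrableOn (fun u => ((inner ℂ (W s u ψ) (Λ u (W s u ψ)) : ℂ)).re)
            (Set.Ioi s) ∧
          ((inner ℂ ψ (T ψ) : ℂ)).re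
            = ‖ψ‖ ^ 2 - ∫ u in Set.Ioi s,
                ((inner ℂ (W s u ψ) (Λ u (W s u ψ)) : ℂ)).re) := by
  -- the integrand is nonnegative
  have hf0 : ∀ (s u : ℝ) (ψ : H),
      0 ≤ ((inner ℂ (W s u ψ) (Λ u (W s u ψ)) : ℂ)).re := by
    intro s u ψ
    have h := Complex.le_def.mp (hΛpos u (W s u ψ))
    simpa using h.1
  -- part (a), squared form
  have hasq : ∀ s, t₀ ≤ s → ∀ t, s ≤ t → ∀ ψ : H,
      ‖W s t ψ‖ ^ 2 ≤ ‖ψ‖ ^ 2 := by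
    intro s hs t ht ψ
    have h := hW s hs t ht ψ
    have hpos : 0 ≤ ∫ u in s..t, ((inner ℂ (W s u ψ) (Λ u (W s u ψ)) : ℂ)).re :=
      intervalIntegral.integral_nonneg ht (fun u _ => hf0 s u ψ)
    linarith
  have parta : ∀ s, t₀ ≤ s → ∀ t, s ≤ t → ∀ ψ : H, ‖W s t ψ‖ ≤ ‖ψ‖ := by
    intro s hs t ht ψ
    nlinarith [hasq s hs t ht ψ, norm_nonneg (W s t ψ), norm_nonneg ψ]
  -- part (b), squared form
  have hbsq : ∀ s, t₀ ≤ s → ∀ t₁ t₂, s ≤ t₁ → t₁ ≤ t₂ → ∀ ψ : H,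
      ‖W s t₂ ψ‖ ^ 2 ≤ ‖W s t₁ ψ‖ ^ 2 := by
    intro s hs t₁ t₂ h1 h2 ψ
    have hA := hW s hs t₁ h1 ψ
    have hB := hW s hs t₂ (h1.trans h2) ψ
    have hi1 := hWint s hs t₁ h1 ψ
    have hi2 := hWint s hs t₂ (h1.trans h2) ψ
    have hi3 : IntervalIntegrable
        (fun u => ((inner ℂ (W s u ψ) (Λ u (W s u ψ)) : ℂ)).re) volume t₁ t₂ := by
      refine hi2.mono_set ?_
      rw [Set.uIcc_of_le h2, Set.uIcc_of_le (h1.trans h2)]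
      exact Set.Icc_subset_Icc h1 le_rfl
    have hsplit := intervalIntegral.integral_add_adjacent_intervals hi1 hi3
    have hpos : 0 ≤ ∫ u in t₁..t₂, ((inner ℂ (W s u ψ) (Λ u (W s u ψ)) : ℂ)).re :=
      intervalIntegral.integral_nonneg h2 (fun u _ => hf0 s u ψ)
    linarith
  have partb : ∀ s, t₀ ≤ s → ∀ t₁ t₂, s ≤ t₁ → t₁ ≤ t₂ → ∀ ψ : H,
      ‖W s t₂ ψ‖ ≤ ‖W s t₁ ψ‖ := by
    intro s hs t₁ t₂ h1 h2 ψ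
    nlinarith [hbsq s hs t₁ t₂ h1 h2 ψ, norm_nonneg (W s t₂ ψ), norm_nonneg (W s t₁ ψ)]
  refine ⟨parta, partb, ?_, ?_⟩
  · -- part (c)
    intro s hs
    -- the monotone limit of the squared norms
    set N : H → ℝ → ℝ := fun ψ t => ‖W s (max s t) ψ‖ ^ 2 with hN
    have hanti : ∀ ψ, Antitone (N ψ) := by
      intro ψ t₁ t₂ h12
      exact hbsq s hs _ _ (le_max_left s t₁) (max_le_max le_rfl h12) ψ
    have hbdd : ∀ ψ, BddBelow (Set.range (N ψ)) := by
      intro ψ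
      refine ⟨0, ?_⟩
      rintro x ⟨t, rfl⟩
      positivity
    set L : H → ℝ := fun ψ => ⨅ t, N ψ t with hL
    have hLtend : ∀ ψ : H, Filter.Tendsto (fun t => ‖W s t ψ‖ ^ 2)
        Filter.atTop (nhds (L ψ)) := by
      intro ψ
      have h1 : Filter.Tendsto (N ψ) Filter.atTop (nhds (L ψ)) :=
        tendsto_atTop_ciInf (hanti ψ) (hbdd ψ)
      refine h1.congr' ?_
      filter_upwards [Filter.eventually_ge_atTop s] with t ht
      simp [hN, max_eq_right ht]
    have hL0 : ∀ ψ, 0 ≤ L ψ := by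
      intro ψ
      exact le_ciInf fun t => by positivity
    -- the polarized limit form
    set l : H → H → ℂ := fun φ ψ =>
      ((L (φ + ψ) : ℂ) - (L (φ - ψ) : ℂ) +
        ((L (φ - Complex.I • ψ) : ℂ) - (L (φ + Complex.I • ψ) : ℂ)) * Complex.I) / 4
      with hl
    have hcast : ∀ χ : H, Filter.Tendsto (fun t => ((‖W s t χ‖ ^ 2 : ℝ) : ℂ))
        Filter.atTop (nhds ((L χ : ℂ))) := by
      intro χ
      exact (Complex.continuous_ofReal.tendsto _).comp (hLtend χ)
    have hltend : ∀ φ ψ : H, Filter.Tendsto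
        (fun t => (inner ℂ (W s t φ) (W s t ψ) : ℂ)) Filter.atTop (nhds (l φ ψ)) := by
      intro φ ψ
      have h2 : Filter.Tendsto (fun t =>
          (((‖W s t (φ + ψ)‖ ^ 2 : ℝ) : ℂ) - ((‖W s t (φ - ψ)‖ ^ 2 : ℝ) : ℂ) +
            (((‖W s t (φ - Complex.I • ψ)‖ ^ 2 : ℝ) : ℂ) -
              ((‖W s t (φ + Complex.I • ψ)‖ ^ 2 : ℝ) : ℂ)) * Complex.I) / 4)
          Filter.atTop (nhds (l φ ψ)) := by
        rw [hl]
        exact (((hcast (φ + ψ)).sub (hcast (φ - ψ))).add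
          (((hcast (φ - Complex.I • ψ)).sub (hcast (φ + Complex.I • ψ))).mul_const
            Complex.I)).div_const 4
      refine h2.congr fun t => ?_
      have hpol := inner_eq_sum_norm_sq_div_four (𝕜 := ℂ) (W s t φ) (W s t ψ)
      simp only [show (RCLike.I : ℂ) = Complex.I from rfl] at hpol
      have e1 : W s t φ + W s t ψ = W s t (φ + ψ) := (map_add _ _ _).symm
      have e2 : W s t φ - W s t ψ = W s t (φ - ψ) := (map_sub _ _ _).symm
      have e3 : W s t φ - Complex.I • W s t ψ = W s t (φ - Complex.I • ψ) := by
        rw [map_sub, _root_.map_smul]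
      have e4 : W s t φ + Complex.I • W s t ψ = W s t (φ + Complex.I • ψ) := by
        rw [map_add, _root_.map_smul]
      rw [hpol, e1, e2, e3, e4]
      norm_cast
    have hlself : ∀ ψ : H, l ψ ψ = (L ψ : ℂ) := by
      intro ψ
      refine tendsto_nhds_unique (hltend ψ ψ) ?_
      refine (hcast ψ).congr fun t => ?_
      rw [inner_self_eq_norm_sq_to_K]
      norm_cast
    have hlbdd : ∀ φ ψ : H, ‖l φ ψ‖ ≤ ‖φ‖ * ‖ψ‖ := by
      intro φ ψ
      refine le_of_tendsto (hltend φ ψ).norm ?_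
      filter_upwards [Filter.eventually_ge_atTop s] with t ht
      calc ‖(inner ℂ (W s t φ) (W s t ψ) : ℂ)‖ ≤ ‖W s t φ‖ * ‖W s t ψ‖ :=
            norm_inner_le_norm _ _
        _ ≤ ‖φ‖ * ‖ψ‖ := mul_le_mul (parta s hs t ht φ) (parta s hs t ht ψ)
            (norm_nonneg _) (norm_nonneg _)
    -- sesquilinearity of l
    have hladd_r : ∀ φ ψ₁ ψ₂ : H, l φ (ψ₁ + ψ₂) = l φ ψ₁ + l φ ψ₂ := by
      intro φ ψ₁ ψ₂
      refine tendsto_nhds_unique (hltend φ (ψ₁ + ψ₂)) ?_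
      refine ((hltend φ ψ₁).add (hltend φ ψ₂)).congr fun t => ?_
      rw [map_add, inner_add_right]
    have hlsmul_r : ∀ (c : ℂ) (φ ψ : H), l φ (c • ψ) = c * l φ ψ := by
      intro c φ ψ
      refine tendsto_nhds_unique (hltend φ (c • ψ)) ?_
      refine ((hltend φ ψ).const_mul c).congr fun t => ?_
      rw [_root_.map_smul, inner_smul_right]
    have hladd_l : ∀ φ₁ φ₂ ψ : H, l (φ₁ + φ₂) ψ = l φ₁ ψ + l φ₂ ψ := by
      intro φ₁ φ₂ ψ
      refine tendsto_nhds_unique (hltend (φ₁ + φ₂) ψ) ?_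
      refine ((hltend φ₁ ψ).add (hltend φ₂ ψ)).congr fun t => ?_
      rw [map_add, inner_add_left]
    have hlsmul_l : ∀ (c : ℂ) (φ ψ : H),
        l (c • φ) ψ = (starRingEnd ℂ) c * l φ ψ := by
      intro c φ ψ
      refine tendsto_nhds_unique (hltend (c • φ) ψ) ?_
      refine ((hltend φ ψ).const_mul _).congr fun t => ?_
      rw [_root_.map_smul, inner_smul_left]
    -- the Riesz representative
    set G : H → (H →L[ℂ] ℂ) := fun ψ => LinearMap.mkContinuous
      { toFun := fun φ => (starRingEnd ℂ) (l φ ψ)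
        map_add' := fun φ₁ φ₂ => by
          show (starRingEnd ℂ) (l (φ₁ + φ₂) ψ)
            = (starRingEnd ℂ) (l φ₁ ψ) + (starRingEnd ℂ) (l φ₂ ψ)
          rw [hladd_l, map_add]
        map_smul' := fun c φ => by
          show (starRingEnd ℂ) (l (c • φ) ψ) = c • (starRingEnd ℂ) (l φ ψ)
          rw [hlsmul_l, map_mul, Complex.conj_conj, smul_eq_mul] }
      ‖ψ‖ (fun φ => by
        show ‖(starRingEnd ℂ) (l φ ψ)‖ ≤ ‖ψ‖ * ‖φ‖
        calc ‖(starRingEnd ℂ) (l φ ψ)‖ = ‖l φ ψ‖ := RCLike.norm_conj _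
          _ ≤ ‖φ‖ * ‖ψ‖ := hlbdd φ ψ
          _ = ‖ψ‖ * ‖φ‖ := mul_comm _ _) with hG
    have hGapp : ∀ φ ψ : H, G ψ φ = (starRingEnd ℂ) (l φ ψ) := fun φ ψ => rfl
    set T0 : H → H := fun ψ => (InnerProductSpace.toDual ℂ H).symm (G ψ) with hT0def
    have hT0 : ∀ φ ψ : H, (inner ℂ φ (T0 ψ) : ℂ) = l φ ψ := by
      intro φ ψ
      have h1 : (inner ℂ (T0 ψ) φ : ℂ) = G ψ φ := by
        rw [hT0def]
        rw [← InnerProductSpace.toDual_apply_apply,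
          (InnerProductSpace.toDual ℂ H).apply_symm_apply]
      have h2 : (inner ℂ φ (T0 ψ) : ℂ) = (starRingEnd ℂ) ((inner ℂ (T0 ψ) φ : ℂ)) :=
        (inner_conj_symm _ _).symm
      rw [h2, h1, hGapp, Complex.conj_conj]
    have hT0norm : ∀ ψ : H, ‖T0 ψ‖ ≤ ‖ψ‖ := by
      intro ψ
      rw [hT0def]
      calc ‖(InnerProductSpace.toDual ℂ H).symm (G ψ)‖ = ‖G ψ‖ :=
            LinearIsometryEquiv.norm_map _ _
        _ ≤ ‖ψ‖ := LinearMap.mkContinuous_norm_le _ (norm_nonneg ψ) _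
    set T : H →L[ℂ] H := LinearMap.mkContinuous
      { toFun := T0
        map_add' := fun ψ₁ ψ₂ => by
          show T0 (ψ₁ + ψ₂) = T0 ψ₁ + T0 ψ₂
          refine ext_inner_left ℂ fun v => ?_
          rw [hT0, inner_add_right, hT0, hT0, hladd_r]
        map_smul' := fun c ψ => by
          show T0 (c • ψ) = c • T0 ψ
          refine ext_inner_left ℂ fun v => ?_
          rw [hT0, inner_smul_right, hT0, hlsmul_r] }
      1 (fun ψ => by simpa using hT0norm ψ) with hT
    have hTapp : ∀ ψ : H, T ψ = T0 ψ := fun ψ => rfl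
    have hTinner : ∀ ψ : H, (inner ℂ ψ (T ψ) : ℂ) = (L ψ : ℂ) := by
      intro ψ
      rw [hTapp, hT0, hlself]
    have hTpos : ∀ ψ : H, 0 ≤ (inner ℂ ψ (T ψ) : ℂ) := by
      intro ψ
      rw [hTinner]
      exact Complex.zero_le_real.mpr (hL0 ψ)
    have hTlim : ∀ ψ : H, Filter.Tendsto (fun t => ‖W s t ψ‖ ^ 2) Filter.atTop
        (nhds ((inner ℂ ψ (T ψ) : ℂ)).re) := by
      intro ψ
      rw [hTinner]
      simpa using hLtend ψ
    refine ⟨T, ⟨hTpos, hTlim⟩, ?_⟩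
    rintro T' ⟨hT'pos, hT'lim⟩
    have hq : ∀ ψ : H, (inner ℂ ψ (T' ψ) : ℂ) = (inner ℂ ψ (T ψ) : ℂ) := by
      intro ψ
      have hre : ((inner ℂ ψ (T' ψ) : ℂ)).re = ((inner ℂ ψ (T ψ) : ℂ)).re :=
        tendsto_nhds_unique (hT'lim ψ) (hTlim ψ)
      have him1 : ((inner ℂ ψ (T' ψ) : ℂ)).im = 0 := by
        have := Complex.le_def.mp (hT'pos ψ)
        simpa using this.2.symm
      have him2 : ((inner ℂ ψ (T ψ) : ℂ)).im = 0 := by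
        have := Complex.le_def.mp (hTpos ψ)
        simpa using this.2.symm
      exact Complex.ext hre (by rw [him1, him2])
    have hq' : ∀ ψ : H, (inner ℂ (T' ψ) ψ : ℂ) = (inner ℂ (T ψ) ψ : ℂ) := by
      intro ψ
      rw [← inner_conj_symm, hq ψ, inner_conj_symm]
    have : (T' : H →ₗ[ℂ] H) = (T : H →ₗ[ℂ] H) := (ext_inner_map _ _).mp hq'
    exact ContinuousLinearMap.coe_injective this
  · -- part (c')
    rintro s hs T ⟨hTpos, hTlim⟩ ψ
    set f : ℝ → ℝ := fun u => ((inner ℂ (W s u ψ) (Λ u (W s u ψ)) : ℂ)).re with hfdef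
    have hfnn : ∀ u, 0 ≤ f u := fun u => hf0 s u ψ
    have hint : ∀ t, s ≤ t → ∫ u in s..t, f u = ‖ψ‖ ^ 2 - ‖W s t ψ‖ ^ 2 := by
      intro t ht
      have h := hW s hs t ht ψ
      linarith
    have hIoc : ∀ t : ℝ, IntegrableOn f (Set.Ioc s t) := by
      intro t
      by_cases h : s ≤ t
      · exact (hWint s hs t h ψ).1
      · rw [Set.Ioc_eq_empty (by intro hlt; exact h hlt.le)]
        exact integrableOn_empty
    have hbound : ∀ᶠ t in Filter.atTop, (∫ u in s..t, ‖f u‖) ≤ ‖ψ‖ ^ 2 := by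
      filter_upwards [Filter.eventually_ge_atTop s] with t ht
      have heq : (∫ u in s..t, ‖f u‖) = ∫ u in s..t, f u := by
        refine intervalIntegral.integral_congr fun u _ => ?_
        exact Real.norm_of_nonneg (hfnn u)
      rw [heq, hint t ht]
      nlinarith [sq_nonneg ‖W s t ψ‖]
    have hInt : IntegrableOn f (Set.Ioi s) :=
      integrableOn_Ioi_of_intervalIntegral_norm_bounded (‖ψ‖ ^ 2) s hIoc
        Filter.tendsto_id hbound
    have htend1 : Filter.Tendsto (fun t => ∫ u in s..t, f u) Filter.atTop
        (nhds (∫ u in Set.Ioi s, f u)) :=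
      intervalIntegral_tendsto_integral_Ioi s hInt Filter.tendsto_id
    have htend2 : Filter.Tendsto (fun t => ∫ u in s..t, f u) Filter.atTop
        (nhds (‖ψ‖ ^ 2 - ((inner ℂ ψ (T ψ) : ℂ)).re)) := by
      refine ((tendsto_const_nhds.sub (hTlim ψ))).congr' ?_
      filter_upwards [Filter.eventually_ge_atTop s] with t ht
      exact (hint t ht).symm
    have heq := tendsto_nhds_unique htend1 htend2
    exact ⟨hInt, by linarith⟩
end

section
/- Let ℋ = ℋ_sys ⊗ ℋ_env be a tensor product of separable Hilbert spaces, G a POVM on a measurable space (Ω, 𝒜_Ω) acting on ℋ, φ ∈ ℋ_env a unit vector, and ζ : (Ω, 𝒜_Ω) → (V, 𝒜_V) a measurable function. Then there exists a POVM E on (V, 𝒜_V) acting on ℋ_sys such that for every unit vector ψ ∈ ℋ_sys, the pushforward under ζ of the probability measure A ↦ ⟨ψ⊗φ, G(A)(ψ⊗φ)⟩ equals B ↦ ⟨ψ, E(B)ψ⟩. Explicitly, E(B) = L_φ G(ζ⁻¹(B)) (· ⊗ φ), where L_φ is the partial scalar product with φ (the adjoint of ψ ↦ ψ⊗φ). 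-/
open scoped ComplexOrder
open MeasureTheory

/-- A POVM on a measurable space `(Ω, 𝒜)` acting on a complex Hilbert space `H`. -/
structure POVM (Ω : Type*) [MeasurableSpace Ω] (H : Type*) [NormedAddCommGroup H]
    [InnerProductSpace ℂ H] [CompleteSpace H] where
  toFun : Set Ω → (H →L[ℂ] H)
  univ_eq : toFun Set.univ = 1
  pos : ∀ A : Set Ω, MeasurableSet A → ∀ ψ : H, 0 ≤ (inner ℂ ψ (toFun A ψ) : ℂ)
  weak_sigma_additive : ∀ A : ℕ → Set Ω, (∀ i, MeasurableSet (A i)) →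
    Pairwise (Function.onFun Disjoint A) → ∀ ψ : H,
    HasSum (fun i => (inner ℂ ψ (toFun (A i) ψ) : ℂ)) (inner ℂ ψ (toFun (⋃ i, A i) ψ))

/-- Let `ℋ = ℋ_sys ⊗ ℋ_env` (the tensor embedding being given by a continuous bilinear
map `tp` with `⟨tp ψ χ, tp ψ' χ'⟩ = ⟨ψ,ψ'⟩⟨χ,χ'⟩`), `G` a POVM on `(Ω, 𝒜_Ω)` acting on
`ℋ`, `φ ∈ ℋ_env` a unit vector, and `ζ : Ω → V` measurable. Then there is a POVM `E`
on `(V, 𝒜_V)` acting on `ℋ_sys` such that for every unit vector `ψ ∈ ℋ_sys` the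
pushforward under `ζ` of `A ↦ ⟨ψ⊗φ, G(A)(ψ⊗φ)⟩` equals `B ↦ ⟨ψ, E(B)ψ⟩`. -/
theorem stmt_19 {Ω V : Type*} [MeasurableSpace Ω] [MeasurableSpace V]
    {Hs He Ht : Type*}
    [NormedAddCommGroup Hs] [InnerProductSpace ℂ Hs] [CompleteSpace Hs]
    [NormedAddCommGroup He] [InnerProductSpace ℂ He] [CompleteSpace He]
    [NormedAddCommGroup Ht] [InnerProductSpace ℂ Ht] [CompleteSpace Ht]
    (tp : Hs →L[ℂ] He →L[ℂ] Ht)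
    (htp : ∀ (ψ ψ' : Hs) (χ χ' : He),
        (inner ℂ (tp ψ χ) (tp ψ' χ') : ℂ) = (inner ℂ ψ ψ' : ℂ) * (inner ℂ χ χ' : ℂ))
    (G : POVM Ω Ht) (φ : He) (hφ : ‖φ‖ = 1)
    (ζ : Ω → V) (hζ : Measurable ζ) :
    ∃ E : POVM V Hs, ∀ ψ : Hs, ‖ψ‖ = 1 → ∀ B : Set V, MeasurableSet B →
      (inner ℂ ψ (E.toFun B ψ) : ℂ)
        = (inner ℂ (tp ψ φ) (G.toFun (ζ ⁻¹' B) (tp ψ φ)) : ℂ) := by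
  classical
  set T : Hs →L[ℂ] Ht := tp.flip φ with hT
  have hTapp : ∀ ψ : Hs, T ψ = tp ψ φ := fun ψ => rfl
  have hkey : ∀ (S : Ht →L[ℂ] Ht) (ψ : Hs),
      (inner ℂ ψ ((ContinuousLinearMap.adjoint T ∘L S ∘L T) ψ) : ℂ)
        = (inner ℂ (tp ψ φ) (S (tp ψ φ)) : ℂ) := by
    intro S ψ
    simp [ContinuousLinearMap.adjoint_inner_right, hTapp]
  refine ⟨⟨fun B => ContinuousLinearMap.adjoint T ∘L G.toFun (ζ ⁻¹' B) ∘L T,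
      ?_, ?_, ?_⟩, ?_⟩
  · -- univ
    show ContinuousLinearMap.adjoint T ∘L G.toFun (ζ ⁻¹' Set.univ) ∘L T = 1
    rw [Set.preimage_univ, G.univ_eq]
    refine ContinuousLinearMap.ext fun ψ => ext_inner_left ℂ fun x => ?_
    simp [ContinuousLinearMap.adjoint_inner_right, hTapp, htp,
      inner_self_eq_norm_sq_to_K, hφ]
  · intro B hB ψ
    rw [hkey]
    exact G.pos _ (hζ hB) _
  · intro A hA hdisj ψ
    have hpre : (⋃ i, ζ ⁻¹' A i) = ζ ⁻¹' ⋃ i, A i := by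
      simp [Set.preimage_iUnion]
    simp only [hkey]
    rw [← hpre]
    exact G.weak_sigma_additive (fun i => ζ ⁻¹' A i) (fun i => hζ (hA i))
      (fun i j hij => (hdisj hij).preimage ζ) _
  · intro ψ hψ B hB
    exact hkey _ ψ
end
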